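/- Let n ≥ 2, let Q be a real symmetric n×n matrix with Q_{kk} > min_{1≤i≤j≤n} Q_{ij} for every k (so that γ̲(Q) is finite), let r ≥ 2 be an integer, let φ ∈ (0,1), and let M be a positive integer with M ≥ m( n/|Δ_r^{n-1}|, φ ). If δ_1, …, δ_M are independent random vectors each uniformly distributed on the finite set Δ_r^{n-1}, then with probability at least 1 − φ it holds that min_{1≤i≤M} δ_i^T Q δ_i − γ(Q) ≤ (1/r) ( √2·K(Q) + max_{1≤i≤n} Q_{ii} − γ̲(Q) ). In particular, if moreover ε > 0 and r ≥ (1/ε)( max_{1≤i≤n} Q_{ii} − γ̲(Q) ) with max_{1≤i≤n} Q_{ii} − γ̲(Q) > 0, then with probability at least 1 − φ, min_{1≤i≤M} δ_i^T Q δ_i − γ(Q) ≤ ( √2·K(Q)/( max_{1≤i≤n} Q_{ii} − γ̲(Q) ) + 1 ) · ε. -/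

import Mathlib

open MeasureTheory Matrix

/-- The standard simplex `Δ^{n-1}`, viewed inside Euclidean space. -/
def stdSimplexE (n : ℕ) : Set (EuclideanSpace ℝ (Fin n)) :=
  {δ | (∀ i, 0 ≤ δ i) ∧ ∑ i, δ i = 1}

/-- The regular grid `Δ_r^{n-1}` of the standard simplex: points of the simplex all of whose
coordinates become nonnegative integers after multiplication by `r`. -/
def regGrid (n r : ℕ) : Set (EuclideanSpace ℝ (Fin n)) :=
  {δ | (∀ i, 0 ≤ δ i) ∧ (∑ i, δ i) = 1 ∧ ∀ i, ∃ m : ℕ, (r : ℝ) * δ i = m}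

/-- The uniform distribution on the (finite) regular grid `Δ_r^{n-1}`: counting measure
restricted to the grid and normalized to a probability measure. -/
noncomputable def uniformGrid (n r : ℕ) : Measure (EuclideanSpace ℝ (Fin n)) :=
  (Measure.count (regGrid n r))⁻¹ • Measure.count.restrict (regGrid n r)

open Finset



lemma collapse1 {n : ℕ} (x : Fin n → ℝ) (i j : Fin n) :
    ∑ k, x k * ((if k = i then (1:ℝ) else 0) * (if k = j then (1:ℝ) else 0))
      = if i = j then x i else 0 := by
  classical
  have h : ∀ k ∈ Finset.univ, x k * ((if k = i then (1:ℝ) else 0) * (if k = j then (1:ℝ) else 0))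
      = if i = k then x k * (if k = j then (1:ℝ) else 0) else 0 := by
    intro k _
    by_cases h : i = k
    · simp [← h]
    · have h' : ¬ (k = i) := fun hh => h hh.symm
      simp [h, h']
  rw [Finset.sum_congr rfl h, Finset.sum_ite_eq]
  by_cases hij : i = j <;> simp [hij]

lemma collapse2 {n : ℕ} (x : Fin n → ℝ) (i : Fin n) :
    ∑ k, x k * ((if k = i then (1:ℝ) else 0)) = x i := by
  classical
  have h : ∀ k ∈ Finset.univ, x k * (if k = i then (1:ℝ) else 0)
      = if i = k then x k else 0 := by
    intro k _
    by_cases h : i = k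
    · simp [← h]
    · have h' : ¬ (k = i) := fun hh => h hh.symm
      simp [h, h']
  rw [Finset.sum_congr rfl h, Finset.sum_ite_eq]
  simp

lemma lemB {n r : ℕ} (x : Fin n → ℝ) (hx1 : ∑ k, x k = 1)
    (s t : Fin r) (i j : Fin n) :
    ∑ f : Fin r → Fin n, (∏ u, x (f u)) *
        ((if f s = i then (1:ℝ) else 0) * (if f t = j then 1 else 0))
      = if s = t then (if i = j then x i else 0) else x i * x j := by
  classical
  have key : ∀ f : Fin r → Fin n,
      (∏ u, x (f u)) * ((if f s = i then (1:ℝ) else 0) * (if f t = j then 1 else 0))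
      = ∏ u, (x (f u) * ((if u = s then (if f u = i then (1:ℝ) else 0) else 1)
              * (if u = t then (if f u = j then (1:ℝ) else 0) else 1))) := by
    intro f
    rw [Finset.prod_mul_distrib, Finset.prod_mul_distrib,
      Finset.prod_ite_eq' Finset.univ s (fun u => if f u = i then (1:ℝ) else 0),
      Finset.prod_ite_eq' Finset.univ t (fun u => if f u = j then (1:ℝ) else 0)]
    simp
  rw [Finset.sum_congr rfl (fun f _ => key f),
    ← Fintype.prod_sum (fun (u : Fin r) (k : Fin n) =>
      x k * ((if u = s then (if k = i then (1:ℝ) else 0) else 1)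
           * (if u = t then (if k = j then (1:ℝ) else 0) else 1)))]
  set g : Fin r → ℝ := fun u => ∑ k, (x k * ((if u = s then (if k = i then (1:ℝ) else 0) else 1)
              * (if u = t then (if k = j then (1:ℝ) else 0) else 1))) with hg
  have hout : ∀ u ∈ Finset.univ, u ∉ ({s, t} : Finset (Fin r)) → g u = 1 := by
    intro u _ hu
    simp only [Finset.mem_insert, Finset.mem_singleton, not_or] at hu
    simp [hg, hu.1, hu.2, hx1]
  rw [show (∏ u, g u) = ∏ u ∈ ({s,t} : Finset (Fin r)), g u from
    (Finset.prod_subset (Finset.subset_univ _) hout).symm]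
  by_cases hst : s = t
  · subst hst
    rw [if_pos rfl, show ({s, s} : Finset (Fin r)) = {s} by simp, Finset.prod_singleton]
    have hgs : g s = if i = j then x i else 0 := by
      simp only [hg, eq_self_iff_true, if_true]
      exact collapse1 x i j
    exact hgs
  · rw [if_neg hst, Finset.prod_pair hst]
    have hgs : g s = x i := by
      simp only [hg, eq_self_iff_true, if_true, if_neg hst, mul_one]
      exact collapse2 x i
    have hgt : g t = x j := by
      simp only [hg, eq_self_iff_true, if_true, if_neg (Ne.symm hst), one_mul]
      exact collapse2 x j
    rw [hgs, hgt]

lemma collapse3 {n : ℕ} (g : Fin n → ℝ) (a : Fin n) :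
    ∑ i, g i * (if a = i then (1:ℝ) else 0) = g a := by
  classical
  simp only [mul_ite, mul_one, mul_zero]
  rw [Finset.sum_ite_eq]
  simp

lemma Vexpand {n : ℕ} (Q : Matrix (Fin n) (Fin n) ℝ) (v : Fin n → ℝ) :
    v ⬝ᵥ Q.mulVec v = ∑ i, ∑ j, Q i j * v i * v j := by
  simp only [dotProduct, Matrix.mulVec, Finset.mul_sum]
  exact Finset.sum_congr rfl fun i _ => Finset.sum_congr rfl fun j _ => by ring

section
variable {n r : ℕ}

lemma collapseQ (Q : Matrix (Fin n) (Fin n) ℝ) (f : Fin r → Fin n) (s t : Fin r) :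
    ∑ i, ∑ j, Q i j * ((if f s = i then (1:ℝ) else 0) * (if f t = j then 1 else 0))
      = Q (f s) (f t) := by
  classical
  have h1 : ∀ i, ∑ j, Q i j * ((if f s = i then (1:ℝ) else 0) * (if f t = j then 1 else 0))
      = (Q i (f t)) * (if f s = i then (1:ℝ) else 0) := by
    intro i
    rw [← collapse3 (fun j => Q i j * (if f s = i then (1:ℝ) else 0)) (f t)]
    exact Finset.sum_congr rfl fun j _ => by ring
  rw [Finset.sum_congr rfl fun i _ => h1 i]
  exact collapse3 (fun i => Q i (f t)) (f s)

/-- value of the empirical grid point -/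
lemma Vd_eq (hr : 0 < r) (Q : Matrix (Fin n) (Fin n) ℝ) (f : Fin r → Fin n) :
    (∑ i, ∑ j, Q i j * ((∑ s, if f s = i then (1:ℝ) else 0) / r)
        * ((∑ t, if f t = j then (1:ℝ) else 0) / r))
      = (∑ s : Fin r, ∑ t : Fin r, Q (f s) (f t)) / ((r:ℝ) * r) := by
  classical
  have hr0 : (r:ℝ) ≠ 0 := Nat.cast_ne_zero.mpr hr.ne'
  rw [eq_div_iff (by positivity), Finset.sum_mul]
  have step1 : ∀ i j, Q i j * ((∑ s, if f s = i then (1:ℝ) else 0) / r)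
        * ((∑ t, if f t = j then (1:ℝ) else 0) / r) * ((r:ℝ) * r)
      = ∑ s, ∑ t, Q i j * ((if f s = i then (1:ℝ) else 0) * (if f t = j then 1 else 0)) := by
    intro i j
    rw [show (∑ s, ∑ t, Q i j * ((if f s = i then (1:ℝ) else 0) * (if f t = j then 1 else 0)))
        = Q i j * ((∑ s, if f s = i then (1:ℝ) else 0) * (∑ t, if f t = j then (1:ℝ) else 0)) from ?_]
    · field_simp
      try ring
    · rw [Finset.sum_mul_sum, Finset.mul_sum]
      exact Finset.sum_congr rfl fun s _ => by rw [Finset.mul_sum]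
  calc ∑ i, (∑ j, Q i j * ((∑ s, if f s = i then (1:ℝ) else 0) / r)
        * ((∑ t, if f t = j then (1:ℝ) else 0) / r)) * ((r:ℝ) * r)
      = ∑ i, ∑ j, (Q i j * ((∑ s, if f s = i then (1:ℝ) else 0) / r)
        * ((∑ t, if f t = j then (1:ℝ) else 0) / r) * ((r:ℝ) * r)) :=
        Finset.sum_congr rfl fun i _ => Finset.sum_mul _ _ _
    _ = ∑ i, ∑ j, ∑ s, ∑ t,
          Q i j * ((if f s = i then (1:ℝ) else 0) * (if f t = j then 1 else 0)) :=
        Finset.sum_congr rfl fun i _ => Finset.sum_congr rfl fun j _ => step1 i j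
    _ = ∑ i, ∑ s, ∑ j, ∑ t,
          Q i j * ((if f s = i then (1:ℝ) else 0) * (if f t = j then 1 else 0)) :=
        Finset.sum_congr rfl fun i _ => Finset.sum_comm
    _ = ∑ s, ∑ i, ∑ j, ∑ t,
          Q i j * ((if f s = i then (1:ℝ) else 0) * (if f t = j then 1 else 0)) :=
        Finset.sum_comm
    _ = ∑ s, ∑ i, ∑ t, ∑ j,
          Q i j * ((if f s = i then (1:ℝ) else 0) * (if f t = j then 1 else 0)) :=
        Finset.sum_congr rfl fun s _ => Finset.sum_congr rfl fun i _ => Finset.sum_comm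
    _ = ∑ s, ∑ t, ∑ i, ∑ j,
          Q i j * ((if f s = i then (1:ℝ) else 0) * (if f t = j then 1 else 0)) :=
        Finset.sum_congr rfl fun s _ => Finset.sum_comm
    _ = ∑ s, ∑ t, Q (f s) (f t) :=
        Finset.sum_congr rfl fun s _ => Finset.sum_congr rfl fun t _ => collapseQ Q f s t
end

section
variable {n r : ℕ}

noncomputable def empDist (n r : ℕ) (f : Fin r → Fin n) : EuclideanSpace ℝ (Fin n) :=
  WithLp.toLp 2 (fun i => (∑ t, if f t = i then (1:ℝ) else 0) / r)

lemma empDist_mem (hr : 0 < r) (f : Fin r → Fin n) : empDist n r f ∈ regGrid n r := by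
  classical
  have hr0 : (r:ℝ) ≠ 0 := Nat.cast_ne_zero.mpr hr.ne'
  refine ⟨fun i => ?_, ?_, fun i => ?_⟩
  · apply div_nonneg _ (by positivity)
    exact Finset.sum_nonneg fun t _ => by positivity
  · show (∑ i, (∑ t, if f t = i then (1:ℝ) else 0) / r) = 1
    rw [← Finset.sum_div, Finset.sum_comm]
    rw [Finset.sum_congr rfl fun t (_ : t ∈ Finset.univ) =>
      show (∑ i, if f t = i then (1:ℝ) else 0) = 1 by
        rw [Finset.sum_ite_eq]; simp]
    simp [hr0]
  · refine ⟨(Finset.univ.filter fun t => f t = i).card, ?_⟩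
    show (r:ℝ) * ((∑ t, if f t = i then (1:ℝ) else 0) / r) = _
    rw [mul_div_cancel₀ _ hr0, Finset.sum_boole]

lemma empDist_V (hr : 0 < r) (Q : Matrix (Fin n) (Fin n) ℝ) (f : Fin r → Fin n) :
    (empDist n r f) ⬝ᵥ Q.mulVec (empDist n r f)
      = (∑ s : Fin r, ∑ t : Fin r, Q (f s) (f t)) / ((r:ℝ) * r) := by
  rw [Vexpand]
  have h := Vd_eq (n := n) hr Q f
  simpa [empDist] using h

lemma inner_exp (hr : 0 < r) (Q : Matrix (Fin n) (Fin n) ℝ)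
    (x : Fin n → ℝ) (hx1 : ∑ i, x i = 1) (s t : Fin r) :
    ∑ f : Fin r → Fin n, (∏ u, x (f u)) * Q (f s) (f t)
      = if s = t then (∑ i, Q i i * x i) else x ⬝ᵥ Q.mulVec x := by
  classical
  calc ∑ f : Fin r → Fin n, (∏ u, x (f u)) * Q (f s) (f t)
      = ∑ f : Fin r → Fin n, ∑ i, ∑ j, (∏ u, x (f u)) *
          (Q i j * ((if f s = i then (1:ℝ) else 0) * (if f t = j then 1 else 0))) := by
        refine Finset.sum_congr rfl fun f _ => ?_
        rw [← collapseQ Q f s t, Finset.mul_sum]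
        exact Finset.sum_congr rfl fun i _ => Finset.mul_sum _ _ _
    _ = ∑ i, ∑ f : Fin r → Fin n, ∑ j, (∏ u, x (f u)) *
          (Q i j * ((if f s = i then (1:ℝ) else 0) * (if f t = j then 1 else 0))) :=
        Finset.sum_comm
    _ = ∑ i, ∑ j, ∑ f : Fin r → Fin n, (∏ u, x (f u)) *
          (Q i j * ((if f s = i then (1:ℝ) else 0) * (if f t = j then 1 else 0))) :=
        Finset.sum_congr rfl fun i _ => Finset.sum_comm
    _ = ∑ i, ∑ j, Q i j * ∑ f : Fin r → Fin n, (∏ u, x (f u)) *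
          ((if f s = i then (1:ℝ) else 0) * (if f t = j then 1 else 0)) := by
        refine Finset.sum_congr rfl fun i _ => Finset.sum_congr rfl fun j _ => ?_
        rw [Finset.mul_sum]
        exact Finset.sum_congr rfl fun f _ => by ring
    _ = ∑ i, ∑ j, Q i j * (if s = t then (if i = j then x i else 0) else x i * x j) := by
        refine Finset.sum_congr rfl fun i _ => Finset.sum_congr rfl fun j _ => ?_
        rw [lemB x hx1 s t i j]
    _ = if s = t then (∑ i, Q i i * x i) else x ⬝ᵥ Q.mulVec x := by
        by_cases hst : s = t
        · rw [if_pos hst]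
          refine Finset.sum_congr rfl fun i _ => ?_
          rw [Finset.sum_congr rfl fun j (_ : j ∈ Finset.univ) =>
            show Q i j * (if s = t then (if i = j then x i else 0) else x i * x j)
              = if i = j then Q i j * x j else 0 by
                rw [if_pos hst]
                by_cases hij : i = j
                · subst hij; simp
                · simp [hij]]
          rw [Finset.sum_ite_eq]
          simp
        · rw [if_neg hst, Vexpand]
          refine Finset.sum_congr rfl fun i _ => Finset.sum_congr rfl fun j _ => ?_
          rw [if_neg hst]; ring

lemma count_ite (A B : ℝ) (s : Fin r) :
    ∑ t : Fin r, (if s = t then A else B) = A - B + (r:ℝ) * B := by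
  classical
  rw [Finset.sum_congr rfl fun t (_ : t ∈ Finset.univ) =>
    show (if s = t then A else B) = (if s = t then A - B else 0) + B by
      by_cases h : s = t <;> simp [h]]
  rw [Finset.sum_add_distrib, Finset.sum_ite_eq, Finset.sum_const]
  simp [nsmul_eq_mul]

lemma exp_eq (hr : 0 < r) (Q : Matrix (Fin n) (Fin n) ℝ)
    (x : Fin n → ℝ) (hx1 : ∑ i, x i = 1) :
    ∑ f : Fin r → Fin n, (∏ u, x (f u)) * ((empDist n r f) ⬝ᵥ Q.mulVec (empDist n r f))
      = (1/(r:ℝ)) * (∑ i, Q i i * x i) + (1 - 1/(r:ℝ)) * (x ⬝ᵥ Q.mulVec x) := by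
  classical
  have hr0 : (r:ℝ) ≠ 0 := Nat.cast_ne_zero.mpr hr.ne'
  calc ∑ f : Fin r → Fin n, (∏ u, x (f u)) * ((empDist n r f) ⬝ᵥ Q.mulVec (empDist n r f))
      = ∑ f : Fin r → Fin n, (∑ s : Fin r, ∑ t : Fin r, (∏ u, x (f u)) * Q (f s) (f t))
          / ((r:ℝ) * r) := by
        refine Finset.sum_congr rfl fun f _ => ?_
        rw [empDist_V hr Q f, ← mul_div_assoc, Finset.mul_sum]
        rw [Finset.sum_congr rfl fun s (_ : s ∈ Finset.univ) => Finset.mul_sum _ _ _]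
    _ = (∑ f : Fin r → Fin n, ∑ s : Fin r, ∑ t : Fin r, (∏ u, x (f u)) * Q (f s) (f t))
          / ((r:ℝ) * r) := (Finset.sum_div _ _ _).symm
    _ = (∑ s : Fin r, ∑ f : Fin r → Fin n, ∑ t : Fin r, (∏ u, x (f u)) * Q (f s) (f t))
          / ((r:ℝ) * r) := by rw [Finset.sum_comm]
    _ = (∑ s : Fin r, ∑ t : Fin r, ∑ f : Fin r → Fin n, (∏ u, x (f u)) * Q (f s) (f t))
          / ((r:ℝ) * r) := by
        rw [Finset.sum_congr rfl fun s (_ : s ∈ Finset.univ) => Finset.sum_comm]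
    _ = (∑ s : Fin r, ∑ t : Fin r,
          if s = t then (∑ i, Q i i * x i) else x ⬝ᵥ Q.mulVec x) / ((r:ℝ) * r) := by
        rw [Finset.sum_congr rfl fun s (_ : s ∈ Finset.univ) =>
          Finset.sum_congr rfl fun t (_ : t ∈ Finset.univ) => inner_exp hr Q x hx1 s t]
    _ = ((r:ℝ) * ((∑ i, Q i i * x i) - x ⬝ᵥ Q.mulVec x + (r:ℝ) * (x ⬝ᵥ Q.mulVec x)))
          / ((r:ℝ) * r) := by
        rw [Finset.sum_congr rfl fun s (_ : s ∈ Finset.univ) =>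
          count_ite (∑ i, Q i i * x i) (x ⬝ᵥ Q.mulVec x) s]
        rw [Finset.sum_const]
        simp only [Finset.card_univ, Fintype.card_fin, nsmul_eq_mul]
    _ = (1/(r:ℝ)) * (∑ i, Q i i * x i) + (1 - 1/(r:ℝ)) * (x ⬝ᵥ Q.mulVec x) := by
        field_simp
        ring

lemma grid_min_le_avg (hr : 0 < r) (Q : Matrix (Fin n) (Fin n) ℝ)
    (x : Fin n → ℝ) (hx0 : ∀ i, 0 ≤ x i) (hx1 : ∑ i, x i = 1)
    (lb : ℝ) (hlb : ∀ δ ∈ regGrid n r, lb ≤ δ ⬝ᵥ Q.mulVec δ) :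
    lb ≤ (1/(r:ℝ)) * (∑ i, Q i i * x i) + (1 - 1/(r:ℝ)) * (x ⬝ᵥ Q.mulVec x) := by
  classical
  have hw1 : ∑ f : Fin r → Fin n, (∏ u, x (f u)) = 1 := by
    rw [← Fintype.prod_sum (fun (_ : Fin r) (k : Fin n) => x k)]
    simp [hx1]
  calc lb = ∑ f : Fin r → Fin n, (∏ u, x (f u)) * lb := by
        rw [← Finset.sum_mul, hw1, one_mul]
    _ ≤ ∑ f : Fin r → Fin n, (∏ u, x (f u)) * ((empDist n r f) ⬝ᵥ Q.mulVec (empDist n r f)) := by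
        refine Finset.sum_le_sum fun f _ => ?_
        exact mul_le_mul_of_nonneg_left (hlb _ (empDist_mem hr f))
          (Finset.prod_nonneg fun u _ => hx0 _)
    _ = _ := exp_eq hr Q x hx1
end


lemma Vexpand' {n : ℕ} (Q : Matrix (Fin n) (Fin n) ℝ) (v : Fin n → ℝ) :
    v ⬝ᵥ Q.mulVec v = ∑ i, ∑ j, Q i j * v i * v j := by
  simp only [dotProduct, Matrix.mulVec, Finset.mul_sum]
  exact Finset.sum_congr rfl fun i _ => Finset.sum_congr rfl fun j _ => by ring

section
variable {n : ℕ}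

/-- Cauchy–Schwarz for sqrt sums -/
lemma cs_sqrt (u w : Fin n → ℝ) :
    ∑ i, u i * w i ≤ Real.sqrt (∑ i, u i ^ 2) * Real.sqrt (∑ i, w i ^ 2) := by
  have h := Finset.sum_mul_sq_le_sq_mul_sq Finset.univ u w
  have h2 : Real.sqrt ((∑ i, u i * w i) ^ 2)
      ≤ Real.sqrt ((∑ i, u i ^ 2) * ∑ i, w i ^ 2) := Real.sqrt_le_sqrt h
  rw [Real.sqrt_sq_eq_abs, Real.sqrt_mul (Finset.sum_nonneg fun i _ => sq_nonneg _)] at h2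
  exact le_trans (le_abs_self _) h2

/-- lower bound lemma: γlow ≤ value of the quadratic form on the simplex -/
lemma gammalow_le (Q : Matrix (Fin n) (Fin n) ℝ) (mQ : ℝ)
    (hQle : ∀ i j, mQ ≤ Q i j) (hdiag : ∀ k, mQ < Q k k) (hn : 0 < n)
    (x : Fin n → ℝ) (hx0 : ∀ i, 0 ≤ x i) (hx1 : ∑ i, x i = 1) :
    mQ + (∑ k, (Q k k - mQ)⁻¹)⁻¹ ≤ x ⬝ᵥ Q.mulVec x := by
  classical
  have hne : (Finset.univ : Finset (Fin n)).Nonempty := by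
    simpa [Finset.univ_nonempty_iff] using Fin.pos_iff_nonempty.mp hn
  set a : Fin n → ℝ := fun k => Q k k - mQ with ha
  have ha0 : ∀ k, 0 < a k := fun k => sub_pos.mpr (hdiag k)
  have hT : 0 < ∑ k, (a k)⁻¹ :=
    Finset.sum_pos (fun k _ => inv_pos.mpr (ha0 k)) hne
  -- Cauchy-Schwarz step
  have hcs : 1 ≤ (∑ k, (x k)^2 * a k) * ∑ k, (a k)⁻¹ := by
    have h := Finset.sum_mul_sq_le_sq_mul_sq Finset.univ
      (fun k => x k * Real.sqrt (a k)) (fun k => (Real.sqrt (a k))⁻¹)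
    have h1 : ∀ k, x k * Real.sqrt (a k) * (Real.sqrt (a k))⁻¹ = x k := by
      intro k
      rw [mul_assoc, mul_inv_cancel₀ (Real.sqrt_ne_zero'.mpr (ha0 k)), mul_one]
    have h2 : ∀ k, (x k * Real.sqrt (a k)) ^ 2 = (x k)^2 * a k := by
      intro k
      rw [mul_pow, Real.sq_sqrt (ha0 k).le]
    have h3 : ∀ k, ((Real.sqrt (a k))⁻¹) ^ 2 = (a k)⁻¹ := by
      intro k
      rw [inv_pow, Real.sq_sqrt (ha0 k).le]
    rw [Finset.sum_congr rfl fun k _ => h1 k] at h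
    rw [Finset.sum_congr rfl fun k _ => h2 k] at h
    rw [Finset.sum_congr rfl fun k _ => h3 k] at h
    rw [hx1] at h
    simpa using h
  have hstep1 : (∑ k, (a k)⁻¹)⁻¹ ≤ ∑ k, (x k)^2 * a k := by
    rw [inv_eq_one_div, div_le_iff₀ hT]
    exact hcs
  -- decomposition step
  have hm : ∑ i, ∑ j, mQ * (x i * x j) = mQ := by
    have : ∑ i, ∑ j, x i * x j = 1 := by
      rw [show (∑ i, ∑ j, x i * x j) = (∑ i, x i) * (∑ j, x j) from
        (Finset.sum_mul_sum Finset.univ Finset.univ x x).symm, hx1]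
      norm_num
    calc ∑ i, ∑ j, mQ * (x i * x j)
        = mQ * ∑ i, ∑ j, (x i * x j) := by
          rw [Finset.mul_sum]
          exact Finset.sum_congr rfl fun i _ =>
            (Finset.mul_sum Finset.univ (fun j => x i * x j) mQ).symm
      _ = mQ := by rw [this, mul_one]
  have hdecomp : x ⬝ᵥ Q.mulVec x = mQ + ∑ i, ∑ j, (Q i j - mQ) * (x i * x j) := by
    rw [Vexpand']
    calc ∑ i, ∑ j, Q i j * x i * x j
        = ∑ i, ∑ j, (mQ * (x i * x j) + (Q i j - mQ) * (x i * x j)) :=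
          Finset.sum_congr rfl fun i _ => Finset.sum_congr rfl fun j _ => by ring
      _ = ∑ i, (∑ j, mQ * (x i * x j) + ∑ j, (Q i j - mQ) * (x i * x j)) :=
          Finset.sum_congr rfl fun i _ => Finset.sum_add_distrib
      _ = (∑ i, ∑ j, mQ * (x i * x j)) + ∑ i, ∑ j, (Q i j - mQ) * (x i * x j) :=
          Finset.sum_add_distrib
      _ = mQ + ∑ i, ∑ j, (Q i j - mQ) * (x i * x j) := by rw [hm]
  have hdiagbound : ∑ i, (x i)^2 * a i ≤ ∑ i, ∑ j, (Q i j - mQ) * (x i * x j) := by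
    refine Finset.sum_le_sum fun i _ => ?_
    have h1 : (x i)^2 * a i = (Q i i - mQ) * (x i * x i) := by
      simp only [ha]; ring
    rw [h1]
    exact Finset.single_le_sum
      (f := fun j => (Q i j - mQ) * (x i * x j))
      (fun j _ => mul_nonneg (sub_nonneg.mpr (hQle i j)) (mul_nonneg (hx0 i) (hx0 j)))
      (Finset.mem_univ i)
  have hfin : (∑ k, (a k)⁻¹)⁻¹ ≤ ∑ i, ∑ j, (Q i j - mQ) * (x i * x j) :=
    le_trans hstep1 hdiagbound
  have : (∑ k, (Q k k - mQ)⁻¹)⁻¹ = (∑ k, (a k)⁻¹)⁻¹ := by simp only [ha]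
  linarith [hfin, hdecomp.ge, hdecomp.le]
end

section
variable {n : ℕ}

lemma sym_swap (Q : Matrix (Fin n) (Fin n) ℝ) (hQsymm : Q.IsSymm) (x y : Fin n → ℝ) :
    ∑ i, ∑ j, Q i j * x i * y j = ∑ i, ∑ j, Q i j * y i * x j := by
  calc ∑ i, ∑ j, Q i j * x i * y j
      = ∑ j, ∑ i, Q i j * x i * y j := Finset.sum_comm
    _ = ∑ i, ∑ j, Q i j * y i * x j :=
      Finset.sum_congr rfl fun i _ => Finset.sum_congr rfl fun j _ => by
        rw [hQsymm.apply i j]; ring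

lemma diff_eq (Q : Matrix (Fin n) (Fin n) ℝ) (hQsymm : Q.IsSymm) (x y : Fin n → ℝ) :
    x ⬝ᵥ Q.mulVec x - y ⬝ᵥ Q.mulVec y
      = ∑ i, (x i - y i) * (∑ j, Q i j * (x j + y j)) := by
  have h1 : ∑ i, (x i - y i) * (∑ j, Q i j * (x j + y j))
      = ∑ i, ∑ j, (Q i j * x i * x j - Q i j * y i * y j
          + (Q i j * x i * y j - Q i j * y i * x j)) := by
    refine Finset.sum_congr rfl fun i _ => ?_
    rw [Finset.mul_sum]
    exact Finset.sum_congr rfl fun j _ => by ring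
  have h2 : ∑ i, ∑ j, (Q i j * x i * y j - Q i j * y i * x j) = 0 := by
    have := sym_swap Q hQsymm x y
    calc ∑ i, ∑ j, (Q i j * x i * y j - Q i j * y i * x j)
        = ∑ i, ((∑ j, Q i j * x i * y j) - ∑ j, Q i j * y i * x j) :=
          Finset.sum_congr rfl fun i _ => Finset.sum_sub_distrib _ _
      _ = (∑ i, ∑ j, Q i j * x i * y j) - ∑ i, ∑ j, Q i j * y i * x j :=
          Finset.sum_sub_distrib _ _
      _ = 0 := by rw [this, sub_self]
  have h3 : ∑ i, ∑ j, (Q i j * x i * x j - Q i j * y i * y j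
      + (Q i j * x i * y j - Q i j * y i * x j))
      = (∑ i, ∑ j, (Q i j * x i * x j - Q i j * y i * y j))
        + ∑ i, ∑ j, (Q i j * x i * y j - Q i j * y i * x j) := by
    calc ∑ i, ∑ j, (Q i j * x i * x j - Q i j * y i * y j
        + (Q i j * x i * y j - Q i j * y i * x j))
        = ∑ i, ((∑ j, (Q i j * x i * x j - Q i j * y i * y j))
          + ∑ j, (Q i j * x i * y j - Q i j * y i * x j)) :=
          Finset.sum_congr rfl fun i _ => Finset.sum_add_distrib
      _ = _ := Finset.sum_add_distrib
  have h4 : ∑ i, ∑ j, (Q i j * x i * x j - Q i j * y i * y j)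
      = (∑ i, ∑ j, Q i j * x i * x j) - ∑ i, ∑ j, Q i j * y i * y j := by
    calc ∑ i, ∑ j, (Q i j * x i * x j - Q i j * y i * y j)
        = ∑ i, ((∑ j, Q i j * x i * x j) - ∑ j, Q i j * y i * y j) :=
          Finset.sum_congr rfl fun i _ => Finset.sum_sub_distrib _ _
      _ = _ := Finset.sum_sub_distrib _ _
  rw [Vexpand', Vexpand' Q y, h1, h3, h2, h4, add_zero]

lemma mulVec_norm_le (Q : Matrix (Fin n) (Fin n) ℝ) (hn : 0 < n) (v : Fin n → ℝ)
    (hv0 : ∀ i, 0 ≤ v i) (hv2 : ∑ i, v i = 2) :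
    Real.sqrt (∑ i, (∑ j, Q i j * v j) ^ 2)
      ≤ 2 * ⨆ i : Fin n, Real.sqrt (∑ k, (Q k i) ^ 2) := by
  classical
  haveI : Nonempty (Fin n) := Fin.pos_iff_nonempty.mp hn
  set c : Fin n → EuclideanSpace ℝ (Fin n) := fun j => WithLp.toLp 2 (fun i => Q i j) with hc
  set W : EuclideanSpace ℝ (Fin n) := ∑ j, v j • c j with hW
  have hWi : ∀ i, W i = ∑ j, Q i j * v j := by
    intro i
    rw [hW]
    rw [show (∑ j, v j • c j) i = ∑ j, (v j • c j) i from by rw [WithLp.ofLp_sum, Finset.sum_apply]]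
    exact Finset.sum_congr rfl fun j _ => by
      show v j * Q i j = Q i j * v j
      ring
  have hnorm : Real.sqrt (∑ i, (∑ j, Q i j * v j) ^ 2) = ‖W‖ := by
    rw [EuclideanSpace.norm_eq]
    congr 1
    exact Finset.sum_congr rfl fun i _ => by rw [hWi i, Real.norm_eq_abs, sq_abs]
  have hcnorm : ∀ j, ‖c j‖ = Real.sqrt (∑ k, (Q k j) ^ 2) := by
    intro j
    rw [EuclideanSpace.norm_eq]
    congr 1
    exact Finset.sum_congr rfl fun k _ => by rw [Real.norm_eq_abs, sq_abs]
  have hsup : ∀ j, ‖c j‖ ≤ ⨆ i : Fin n, Real.sqrt (∑ k, (Q k i) ^ 2) := by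
    intro j
    rw [hcnorm j]
    exact le_ciSup (f := fun i => Real.sqrt (∑ k, (Q k i) ^ 2))
      (Set.Finite.bddAbove (Set.finite_range _)) j
  calc Real.sqrt (∑ i, (∑ j, Q i j * v j) ^ 2) = ‖W‖ := hnorm
    _ ≤ ∑ j, ‖v j • c j‖ := by rw [hW]; exact norm_sum_le _ _
    _ = ∑ j, v j * ‖c j‖ := Finset.sum_congr rfl fun j _ => by
        rw [norm_smul, Real.norm_eq_abs, abs_of_nonneg (hv0 j)]
    _ ≤ ∑ j, v j * ⨆ i : Fin n, Real.sqrt (∑ k, (Q k i) ^ 2) :=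
        Finset.sum_le_sum fun j _ => mul_le_mul_of_nonneg_left (hsup j) (hv0 j)
    _ = 2 * ⨆ i : Fin n, Real.sqrt (∑ k, (Q k i) ^ 2) := by
        rw [← Finset.sum_mul, hv2]

lemma lipschitz_bound (Q : Matrix (Fin n) (Fin n) ℝ) (hQsymm : Q.IsSymm) (hn : 0 < n)
    (x y : Fin n → ℝ) (hx0 : ∀ i, 0 ≤ x i) (hx1 : ∑ i, x i = 1)
    (hy0 : ∀ i, 0 ≤ y i) (hy1 : ∑ i, y i = 1) :
    x ⬝ᵥ Q.mulVec x - y ⬝ᵥ Q.mulVec y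
      ≤ (2 * ⨆ i : Fin n, Real.sqrt (∑ k, (Q k i) ^ 2))
        * Real.sqrt (∑ i, (x i - y i) ^ 2) := by
  rw [diff_eq Q hQsymm x y]
  have h1 := cs_sqrt (fun i => x i - y i) (fun i => ∑ j, Q i j * (x j + y j))
  have h2 : Real.sqrt (∑ i, (∑ j, Q i j * (x j + y j)) ^ 2)
      ≤ 2 * ⨆ i : Fin n, Real.sqrt (∑ k, (Q k i) ^ 2) := by
    apply mulVec_norm_le Q hn _ (fun i => add_nonneg (hx0 i) (hy0 i))
    rw [Finset.sum_add_distrib, hx1, hy1]; norm_num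
  calc ∑ i, (x i - y i) * (∑ j, Q i j * (x j + y j))
      ≤ Real.sqrt (∑ i, (x i - y i) ^ 2)
        * Real.sqrt (∑ i, (∑ j, Q i j * (x j + y j)) ^ 2) := h1
    _ ≤ Real.sqrt (∑ i, (x i - y i) ^ 2)
        * (2 * ⨆ i : Fin n, Real.sqrt (∑ k, (Q k i) ^ 2)) :=
        mul_le_mul_of_nonneg_left h2 (Real.sqrt_nonneg _)
    _ = (2 * ⨆ i : Fin n, Real.sqrt (∑ k, (Q k i) ^ 2))
        * Real.sqrt (∑ i, (x i - y i) ^ 2) := mul_comm _ _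
end

open scoped ENNReal

section
variable {n r : ℕ}

lemma regGrid_finite (hr : 0 < r) : (regGrid n r).Finite := by
  classical
  have hr0 : (r:ℝ) ≠ 0 := Nat.cast_ne_zero.mpr hr.ne'
  apply Set.Finite.subset (Set.finite_range
    (fun v : Fin n → Fin (r+1) => (WithLp.toLp 2 (fun i => (v i : ℝ) / r) : EuclideanSpace ℝ (Fin n))))
  rintro δ ⟨h0, h1, hint⟩
  have hle : ∀ i, δ i ≤ 1 := by
    intro i
    rw [← h1]
    exact Finset.single_le_sum (fun k _ => h0 k) (Finset.mem_univ i)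
  have hm : ∀ i, ∃ m : Fin (r+1), δ i = (m : ℝ) / r := by
    intro i
    obtain ⟨m, hmi⟩ := hint i
    have hmr : m ≤ r := by
      have : (m : ℝ) ≤ r := by
        rw [← hmi]
        calc (r:ℝ) * δ i ≤ (r:ℝ) * 1 :=
          mul_le_mul_of_nonneg_left (hle i) (by positivity)
        _ = r := mul_one _
      exact_mod_cast this
    exact ⟨⟨m, Nat.lt_succ_of_le hmr⟩, by
      rw [eq_div_iff hr0, mul_comm]; exact hmi⟩
  choose v hv using hm
  exact ⟨v, by ext i; exact (hv i).symm⟩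

/-- vertex of the simplex -/
noncomputable def vertE (n : ℕ) (k : Fin n) : EuclideanSpace ℝ (Fin n) :=
  WithLp.toLp 2 (fun i => if i = k then (1:ℝ) else 0)

lemma vertE_mem (hr : 0 < r) (k : Fin n) : vertE n k ∈ regGrid n r := by
  classical
  refine ⟨fun i => by unfold vertE; positivity, ?_, fun i => ?_⟩
  · show (∑ i, if i = k then (1:ℝ) else 0) = 1
    rw [Finset.sum_ite_eq' Finset.univ k (fun _ => (1:ℝ))]
    simp
  · unfold vertE
    by_cases h : i = k
    · exact ⟨r, by simp [h]⟩
    · exact ⟨0, by simp [h]⟩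

lemma regGrid_card (hn : 2 ≤ n) (hr : 2 ≤ r) : n < (regGrid n r).ncard := by
  classical
  have hr0 : (r:ℝ) ≠ 0 := by positivity
  have hfin := regGrid_finite (n := n) (lt_of_lt_of_le two_pos hr)
  have hn0 : 0 < n := lt_of_lt_of_le two_pos hn
  set i0 : Fin n := ⟨0, hn0⟩
  set i1 : Fin n := ⟨1, lt_of_lt_of_le one_lt_two hn⟩
  have h01 : i0 ≠ i1 := by simp [i0, i1, Fin.ext_iff]
  set w : EuclideanSpace ℝ (Fin n) :=
    WithLp.toLp 2 (fun i => (if i = i0 then (1:ℝ)/r else 0) + (if i = i1 then ((r:ℝ)-1)/r else 0)) with hw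
  have hwmem : w ∈ regGrid n r := by
    refine ⟨fun i => ?_, ?_, fun i => ?_⟩
    · have h2r : (2:ℝ) ≤ r := by exact_mod_cast hr
      refine add_nonneg ?_ ?_
      · split
        · positivity
        · exact le_refl 0
      · split
        · apply div_nonneg <;> linarith
        · exact le_refl 0
    · show (∑ i, ((if i = i0 then (1:ℝ)/r else 0) + (if i = i1 then ((r:ℝ)-1)/r else 0))) = 1
      rw [Finset.sum_add_distrib,
        Finset.sum_ite_eq' Finset.univ i0 (fun _ => (1:ℝ)/r),
        Finset.sum_ite_eq' Finset.univ i1 (fun _ => ((r:ℝ)-1)/r)]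
      simp
      field_simp
      ring
    · show ∃ m : ℕ, (r:ℝ) * ((if i = i0 then (1:ℝ)/r else 0) + (if i = i1 then ((r:ℝ)-1)/r else 0)) = m
      by_cases h0 : i = i0
      · refine ⟨1, ?_⟩
        rw [if_pos h0, if_neg (h0 ▸ h01 : ¬ i = i1)]
        field_simp
        push_cast; ring
      · by_cases h1 : i = i1
        · refine ⟨r - 1, ?_⟩
          rw [if_neg h0, if_pos h1]
          rw [Nat.cast_sub (le_trans one_le_two hr)]
          field_simp
          push_cast; ring
        · exact ⟨0, by rw [if_neg h0, if_neg h1]; simp⟩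
  have hwval : w i0 = 1/(r:ℝ) := by
    show (if i0 = i0 then (1:ℝ)/r else 0) + (if i0 = i1 then ((r:ℝ)-1)/r else 0) = 1/r
    rw [if_pos rfl, if_neg h01, add_zero]
  have h2r : (2:ℝ) ≤ r := by exact_mod_cast hr
  have hwne : w ∉ Set.range (vertE n) := by
    rintro ⟨k, hk⟩
    have hci : vertE n k i0 = w i0 := by rw [hk]
    rw [hwval] at hci
    by_cases hk0 : i0 = k
    · have h1 : (1:ℝ) = 1/r := by simpa [vertE, hk0] using hci
      have : (r:ℝ) = 1 := by field_simp at h1; linarith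
      linarith
    · have h1 : (0:ℝ) = 1/r := by simpa [vertE, hk0] using hci
      exact one_div_ne_zero hr0 h1.symm
  have hinj : Function.Injective (vertE n) := by
    intro k k' hkk
    by_contra hne
    have := congrArg (fun v : EuclideanSpace ℝ (Fin n) => v k) hkk
    simp only [vertE, if_pos rfl, if_neg hne] at this
    exact one_ne_zero this
  have hsub : insert w (Set.range (vertE n)) ⊆ regGrid n r := by
    rintro z (rfl | ⟨k, rfl⟩)
    · exact hwmem
    · exact vertE_mem (lt_of_lt_of_le two_pos hr) k
  have hcard : (insert w (Set.range (vertE n))).ncard = n + 1 := by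
    rw [Set.ncard_insert_of_notMem hwne (Set.finite_range _), ← Set.image_univ,
      Set.ncard_image_of_injective _ hinj, Set.ncard_univ, Nat.card_eq_fintype_card,
      Fintype.card_fin]
  have := Set.ncard_le_ncard hsub hfin
  omega
end


section
variable {n r : ℕ}

lemma count_regGrid (hfin : (regGrid n r).Finite) :
    Measure.count (regGrid n r) = ((regGrid n r).ncard : ℝ≥0∞) := by
  rw [Measure.count_apply_finite _ hfin, Set.ncard_eq_toFinset_card _ hfin]

lemma uniformGrid_prob (hfin : (regGrid n r).Finite) (hpos : 0 < (regGrid n r).ncard) :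
    IsProbabilityMeasure (uniformGrid n r) := by
  constructor
  rw [uniformGrid, Measure.smul_apply, Measure.restrict_apply_univ, count_regGrid hfin,
    smul_eq_mul]
  exact ENNReal.inv_mul_cancel (by exact_mod_cast hpos.ne') (ENNReal.natCast_ne_top _)

lemma uniformGrid_compl (hfin : (regGrid n r).Finite) (hpos : 0 < (regGrid n r).ncard)
    (S : Finset (EuclideanSpace ℝ (Fin n))) (hS : ↑S ⊆ regGrid n r) :
    uniformGrid n r (↑S)ᶜ
      = ENNReal.ofReal ((((regGrid n r).ncard - S.card : ℕ) : ℝ) / (regGrid n r).ncard) := by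
  classical
  have hmes : MeasurableSet ((↑S : Set (EuclideanSpace ℝ (Fin n)))ᶜ) :=
    (S.measurableSet).compl
  rw [uniformGrid, Measure.smul_apply, Measure.restrict_apply hmes, smul_eq_mul,
    count_regGrid hfin]
  have hset : (↑S : Set (EuclideanSpace ℝ (Fin n)))ᶜ ∩ regGrid n r
      = regGrid n r \ ↑S := by
    rw [Set.diff_eq, Set.inter_comm]
  rw [hset, Measure.count_apply_finite _ (hfin.diff (t := ↑S))]
  have hdcard : ((hfin.diff (t := ↑S)).toFinset.card) = (regGrid n r).ncard - S.card := by
    rw [← Set.ncard_eq_toFinset_card _ (hfin.diff (t := ↑S)), Set.ncard_diff hS (Finset.finite_toSet S),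
      Set.ncard_coe_finset]
  rw [hdcard, ENNReal.ofReal_div_of_pos (by exact_mod_cast hpos), ENNReal.ofReal_natCast,
    ENNReal.ofReal_natCast, div_eq_mul_inv, mul_comm]
end

set_option maxHeartbeats 2000000 in
theorem stmt10 {n : ℕ} (hn : 2 ≤ n)
    (Q : Matrix (Fin n) (Fin n) ℝ) (hQsymm : Q.IsSymm)
    (mQ : ℝ) (hmQ : mQ = ⨅ p : {p : Fin n × Fin n // p.1 ≤ p.2}, Q p.1.1 p.1.2)
    (hdiag : ∀ k, mQ < Q k k)
    (γlow : ℝ) (hγlow : γlow = mQ + (∑ k, (Q k k - mQ)⁻¹)⁻¹)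
    (K γQ : ℝ)
    (hK : K = 2 * ⨆ i : Fin n, Real.sqrt (∑ k, (Q k i) ^ 2))
    (hγ : γQ = sInf ((fun δ : EuclideanSpace ℝ (Fin n) => δ ⬝ᵥ Q.mulVec δ) '' stdSimplexE n))
    (r : ℕ) (hr : 2 ≤ r)
    (φ : ℝ) (hφ0 : 0 < φ) (hφ1 : φ < 1)
    (M : ℕ) (hM0 : 0 < M)
    (hM : (M : ℝ) ≥
      Real.log φ / Real.log (1 - (n : ℝ) / ((regGrid n r).ncard : ℝ))) :
    ENNReal.ofReal (1 - φ) ≤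
      Measure.pi (fun _ : Fin M => uniformGrid n r)
        {ω : Fin M → EuclideanSpace ℝ (Fin n) |
          (⨅ i : Fin M, (ω i) ⬝ᵥ Q.mulVec (ω i)) - γQ ≤
            (1 / (r : ℝ)) * (Real.sqrt 2 * K + (⨆ k : Fin n, Q k k) - γlow)} ∧
    ∀ ε : ℝ, 0 < ε → 0 < (⨆ k : Fin n, Q k k) - γlow →
      (r : ℝ) ≥ (1 / ε) * ((⨆ k : Fin n, Q k k) - γlow) →
      ENNReal.ofReal (1 - φ) ≤
        Measure.pi (fun _ : Fin M => uniformGrid n r)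
          {ω : Fin M → EuclideanSpace ℝ (Fin n) |
            (⨅ i : Fin M, (ω i) ⬝ᵥ Q.mulVec (ω i)) - γQ ≤
              (Real.sqrt 2 * K / ((⨆ k : Fin n, Q k k) - γlow) + 1) * ε} := by
  classical
  have hn0 : 0 < n := by omega
  have hrn : 0 < r := by omega
  have hr2 : (2:ℝ) ≤ r := by exact_mod_cast hr
  have hr0 : (r:ℝ) ≠ 0 := by positivity
  have hrpos : (0:ℝ) < r := by positivity
  haveI : Nonempty (Fin n) := Fin.pos_iff_nonempty.mp hn0
  haveI : Nonempty (Fin M) := Fin.pos_iff_nonempty.mp hM0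
  -- entries bounded below by mQ
  have hQle : ∀ i j, mQ ≤ Q i j := by
    intro i j
    rcases le_total i j with h | h
    · rw [hmQ]
      exact ciInf_le (f := fun p : {p : Fin n × Fin n // p.1 ≤ p.2} => Q p.1.1 p.1.2)
        ((Set.finite_range _).bddBelow) ⟨(i, j), h⟩
    · have h1 : mQ ≤ Q j i := by
        rw [hmQ]
        exact ciInf_le (f := fun p : {p : Fin n × Fin n // p.1 ≤ p.2} => Q p.1.1 p.1.2)
          ((Set.finite_range _).bddBelow) ⟨(j, i), h⟩
      exact (hQsymm.apply i j) ▸ h1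
  have hK0 : 0 ≤ K := by
    rw [hK]
    have h1 : Real.sqrt (∑ k, (Q k (Classical.arbitrary (Fin n))) ^ 2)
        ≤ ⨆ i : Fin n, Real.sqrt (∑ k, (Q k i) ^ 2) :=
      le_ciSup (f := fun i => Real.sqrt (∑ k, (Q k i) ^ 2))
        ((Set.finite_range _).bddAbove) _
    have h2 : 0 ≤ Real.sqrt (∑ k, (Q k (Classical.arbitrary (Fin n))) ^ 2) :=
      Real.sqrt_nonneg _
    linarith
  have hQiiD : ∀ k : Fin n, Q k k ≤ ⨆ k : Fin n, Q k k := fun k =>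
    le_ciSup (f := fun k : Fin n => Q k k) ((Set.finite_range _).bddAbove) k
  -- γlow is a lower bound on the simplex
  have hγlow_le : ∀ x ∈ stdSimplexE n, γlow ≤ x ⬝ᵥ Q.mulVec x := by
    intro x hx
    rw [hγlow]
    exact gammalow_le Q mQ hQle hdiag hn0 x hx.1 hx.2
  have hgrid_sub : regGrid n r ⊆ stdSimplexE n := fun δ hδ => ⟨hδ.1, hδ.2.1⟩
  have hsimplex_ne : (stdSimplexE n).Nonempty :=
    ⟨vertE n ⟨0, hn0⟩, hgrid_sub (vertE_mem hrn _)⟩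
  have himg_ne : ((fun δ : EuclideanSpace ℝ (Fin n) => δ ⬝ᵥ Q.mulVec δ) ''
      stdSimplexE n).Nonempty := hsimplex_ne.image _
  have hbdd : BddBelow ((fun δ : EuclideanSpace ℝ (Fin n) => δ ⬝ᵥ Q.mulVec δ) ''
      stdSimplexE n) := ⟨γlow, by rintro y ⟨x, hx, rfl⟩; exact hγlow_le x hx⟩
  have hγlow_γQ : γlow ≤ γQ := by
    rw [hγ]
    exact le_csInf himg_ne (by rintro y ⟨x, hx, rfl⟩; exact hγlow_le x hx)
  have hγQ_le : ∀ x ∈ stdSimplexE n, γQ ≤ x ⬝ᵥ Q.mulVec x := by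
    intro x hx
    rw [hγ]
    exact csInf_le hbdd ⟨x, hx, rfl⟩
  -- grid minimizer
  have hfin := regGrid_finite (n := n) hrn
  have hgrid_ne : (regGrid n r).Nonempty := ⟨vertE n ⟨0, hn0⟩, vertE_mem hrn _⟩
  obtain ⟨δm, hδm_mem, hδm_min⟩ := Set.exists_min_image (regGrid n r)
    (fun δ => δ ⬝ᵥ Q.mulVec δ) hfin hgrid_ne
  -- deterministic bound on the grid minimum
  have hkey : δm ⬝ᵥ Q.mulVec δm ≤ γQ + (1/(r:ℝ)) * ((⨆ k : Fin n, Q k k) - γlow) := by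
    have hx_all : ∀ x ∈ stdSimplexE n, δm ⬝ᵥ Q.mulVec δm
        ≤ (1/(r:ℝ)) * (⨆ k : Fin n, Q k k) + (1 - 1/(r:ℝ)) * (x ⬝ᵥ Q.mulVec x) := by
      intro x hx
      have h1 := grid_min_le_avg hrn Q x hx.1 hx.2 (δm ⬝ᵥ Q.mulVec δm)
        (fun δ hδ => hδm_min δ hδ)
      have h2 : ∑ i, Q i i * x i ≤ ⨆ k : Fin n, Q k k := by
        calc ∑ i, Q i i * x i ≤ ∑ i, (⨆ k : Fin n, Q k k) * x i :=
            Finset.sum_le_sum fun i _ =>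
              mul_le_mul_of_nonneg_right (hQiiD i) (hx.1 i)
          _ = ⨆ k : Fin n, Q k k := by rw [← Finset.mul_sum, hx.2, mul_one]
      have h3 : (0:ℝ) ≤ 1/(r:ℝ) := by positivity
      have h4 := mul_le_mul_of_nonneg_left h2 h3
      linarith
    have hr1 : (0:ℝ) < 1 - 1/(r:ℝ) := by
      rw [sub_pos, div_lt_one hrpos]
      linarith
    have h4 : (δm ⬝ᵥ Q.mulVec δm - (1/(r:ℝ)) * (⨆ k : Fin n, Q k k)) / (1 - 1/(r:ℝ))
        ≤ γQ := by
      rw [hγ]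
      apply le_csInf himg_ne
      rintro y ⟨x, hx, rfl⟩
      rw [div_le_iff₀ hr1]
      have := hx_all x hx
      linarith [this]
    rw [div_le_iff₀ hr1] at h4
    have h6 : (0:ℝ) ≤ 1/(r:ℝ) := by positivity
    nlinarith [mul_le_mul_of_nonneg_left hγlow_γQ h6]
  -- a coordinate of size ≥ 1/r
  have hex_j : ∃ j, 1/(r:ℝ) ≤ δm j := by
    have hpos : ∃ j, 0 < δm j := by
      by_contra hcon
      push_neg at hcon
      have : ∀ j, δm j = 0 := fun j => le_antisymm (hcon j) (hδm_mem.1 j)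
      have hsum := hδm_mem.2.1
      rw [Finset.sum_congr rfl fun j _ => this j] at hsum
      simp at hsum
    obtain ⟨j, hj⟩ := hpos
    obtain ⟨m, hm⟩ := hδm_mem.2.2 j
    have hm0 : m ≠ 0 := by
      intro h
      rw [h] at hm
      simp only [Nat.cast_zero] at hm
      have : δm j = 0 := by
        have := mul_eq_zero.mp hm
        tauto
      linarith
    have hm1 : (1:ℝ) ≤ (r:ℝ) * δm j := by
      rw [hm]
      exact_mod_cast Nat.one_le_iff_ne_zero.mpr hm0
    exact ⟨j, by rw [div_le_iff₀ hrpos]; linarith⟩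
  obtain ⟨j, hj⟩ := hex_j
  -- the neighbor family
  set F : Fin n → EuclideanSpace ℝ (Fin n) := fun k => WithLp.toLp 2 (fun i =>
    δm i + (if i = k then 1/(r:ℝ) else 0) - (if i = j then 1/(r:ℝ) else 0)) with hF
  have hFmem : ∀ k, F k ∈ regGrid n r := by
    intro k
    refine ⟨fun i => ?_, ?_, fun i => ?_⟩
    · show 0 ≤ δm i + (if i = k then 1/(r:ℝ) else 0) - (if i = j then 1/(r:ℝ) else 0)
      have h0 := hδm_mem.1 i
      have hr1 : (0:ℝ) ≤ 1/(r:ℝ) := by positivity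
      by_cases hij : i = j
      · subst hij
        by_cases hik : i = k
        · rw [if_pos hik, if_pos rfl]; linarith
        · rw [if_neg hik, if_pos rfl]; linarith
      · by_cases hik : i = k
        · rw [if_pos hik, if_neg hij]; linarith
        · rw [if_neg hik, if_neg hij]; linarith
    · show (∑ i, (δm i + (if i = k then 1/(r:ℝ) else 0)
          - (if i = j then 1/(r:ℝ) else 0))) = 1
      rw [Finset.sum_sub_distrib, Finset.sum_add_distrib,
        Finset.sum_ite_eq' Finset.univ k (fun _ => 1/(r:ℝ)),
        Finset.sum_ite_eq' Finset.univ j (fun _ => 1/(r:ℝ)), hδm_mem.2.1]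
      simp
    · show ∃ m : ℕ, (r:ℝ) * (δm i + (if i = k then 1/(r:ℝ) else 0)
          - (if i = j then 1/(r:ℝ) else 0)) = m
      obtain ⟨m, hm⟩ := hδm_mem.2.2 i
      by_cases hik : i = k <;> by_cases hij : i = j
      · refine ⟨m, ?_⟩
        rw [if_pos hik, if_pos hij]
        rw [show (r:ℝ) * (δm i + 1/(r:ℝ) - 1/(r:ℝ)) = (r:ℝ) * δm i from by ring]
        exact hm
      · refine ⟨m + 1, ?_⟩
        rw [if_pos hik, if_neg hij]
        rw [show (r:ℝ) * (δm i + 1/(r:ℝ) - 0) = (r:ℝ) * δm i + (r:ℝ) * (1/(r:ℝ)) from by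
          ring, mul_one_div, div_self hr0, hm]
        push_cast
        ring
      · subst hij
        have hm1 : (1:ℝ) ≤ (m:ℝ) := by
          rw [← hm]
          calc (1:ℝ) = (r:ℝ) * (1/(r:ℝ)) := by field_simp
            _ ≤ (r:ℝ) * δm i := mul_le_mul_of_nonneg_left hj (by positivity)
        have hm1' : 1 ≤ m := by exact_mod_cast hm1
        refine ⟨m - 1, ?_⟩
        rw [if_neg hik, if_pos rfl]
        rw [show (r:ℝ) * (δm i + 0 - 1/(r:ℝ)) = (r:ℝ) * δm i - (r:ℝ) * (1/(r:ℝ)) from by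
          ring, mul_one_div, div_self hr0, hm, Nat.cast_sub hm1']
        push_cast
        ring
      · refine ⟨m, ?_⟩
        rw [if_neg hik, if_neg hij]
        rw [show (r:ℝ) * (δm i + 0 - 0) = (r:ℝ) * δm i from by ring]
        exact hm
  have hFdist : ∀ k, Real.sqrt (∑ i, (F k i - δm i)^2) ≤ Real.sqrt 2 / r := by
    intro k
    have hdiff : ∀ i, F k i - δm i
        = (if i = k then 1/(r:ℝ) else 0) - (if i = j then 1/(r:ℝ) else 0) := by
      intro i
      show δm i + (if i = k then 1/(r:ℝ) else 0) - (if i = j then 1/(r:ℝ) else 0)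
        - δm i = _
      ring
    have hterm : ∀ i, (F k i - δm i)^2
        ≤ (if i = k then 1/(r:ℝ)^2 else 0) + (if i = j then 1/(r:ℝ)^2 else 0) := by
      intro i
      rw [hdiff i]
      by_cases hik : i = k <;> by_cases hij : i = j
      · rw [if_pos hik, if_pos hij, if_pos hik, if_pos hij, sub_self]
        have h1 : (0:ℝ) < 1/(r:ℝ)^2 := by positivity
        nlinarith
      · rw [if_pos hik, if_neg hij, if_pos hik, if_neg hij, sub_zero, div_pow, one_pow,
          add_zero]
      · rw [if_neg hik, if_pos hij, if_neg hik, if_pos hij, zero_sub, neg_sq, div_pow,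
          one_pow, zero_add]
      · rw [if_neg hik, if_neg hij, if_neg hik, if_neg hij, sub_zero, zero_add]
        have h1 : (0:ℝ) < 1/(r:ℝ)^2 := by positivity
        nlinarith
    have hsum : ∑ i, (F k i - δm i)^2 ≤ 2/(r:ℝ)^2 := by
      calc ∑ i, (F k i - δm i)^2
          ≤ ∑ i, ((if i = k then 1/(r:ℝ)^2 else 0) + (if i = j then 1/(r:ℝ)^2 else 0)) :=
            Finset.sum_le_sum fun i _ => hterm i
        _ = 2/(r:ℝ)^2 := by
            rw [Finset.sum_add_distrib,
              Finset.sum_ite_eq' Finset.univ k (fun _ => 1/(r:ℝ)^2),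
              Finset.sum_ite_eq' Finset.univ j (fun _ => 1/(r:ℝ)^2)]
            simp
            ring
    calc Real.sqrt (∑ i, (F k i - δm i)^2) ≤ Real.sqrt (2/(r:ℝ)^2) :=
        Real.sqrt_le_sqrt hsum
      _ = Real.sqrt 2 / r := by
          rw [show (2:ℝ)/(r:ℝ)^2 = (Real.sqrt 2 / r)^2 from by
            rw [div_pow, Real.sq_sqrt (by norm_num : (0:ℝ) ≤ 2)], Real.sqrt_sq (by positivity)]
  have hFval : ∀ k, (F k) ⬝ᵥ Q.mulVec (F k)
      ≤ δm ⬝ᵥ Q.mulVec δm + K * (Real.sqrt 2 / r) := by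
    intro k
    have hFk := hgrid_sub (hFmem k)
    have hδms := hgrid_sub hδm_mem
    have h1 := lipschitz_bound Q hQsymm hn0 (F k) δm hFk.1 hFk.2 hδms.1 hδms.2
    rw [← hK] at h1
    have h2 : K * Real.sqrt (∑ i, (F k i - δm i)^2) ≤ K * (Real.sqrt 2 / r) :=
      mul_le_mul_of_nonneg_left (hFdist k) hK0
    linarith
  have hFinj : Function.Injective F := by
    intro k k' hkk
    by_contra hne
    have h1 : δm k + (if k = k then 1/(r:ℝ) else 0) - (if k = j then 1/(r:ℝ) else 0)
        = δm k + (if k = k' then 1/(r:ℝ) else 0) - (if k = j then 1/(r:ℝ) else 0) :=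
      congrArg (fun v : EuclideanSpace ℝ (Fin n) => v k) hkk
    rw [if_pos rfl, if_neg hne] at h1
    have : (1:ℝ)/(r:ℝ) = 0 := by
      by_cases hkj : k = j
      · rw [if_pos hkj] at h1; linarith
      · rw [if_neg hkj] at h1; linarith
    rw [div_eq_zero_iff] at this
    rcases this with h | h
    · exact one_ne_zero h
    · exact hr0 h
  set S : Finset (EuclideanSpace ℝ (Fin n)) := Finset.image F Finset.univ with hSdef
  have hScard : S.card = n := by
    rw [hSdef, Finset.card_image_of_injective _ hFinj, Finset.card_univ, Fintype.card_fin]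
  have hSsub : ↑S ⊆ regGrid n r := by
    intro z hz
    simp only [hSdef, Finset.coe_image, Set.mem_image] at hz
    obtain ⟨k, _, rfl⟩ := hz
    exact hFmem k
  have hSval : ∀ δ ∈ S, δ ⬝ᵥ Q.mulVec δ - γQ
      ≤ (1/(r:ℝ)) * (Real.sqrt 2 * K + (⨆ k : Fin n, Q k k) - γlow) := by
    intro δ hδ
    simp only [hSdef, Finset.mem_image] at hδ
    obtain ⟨k, _, rfl⟩ := hδ
    have h1 := hFval k
    have h2 : K * (Real.sqrt 2 / r) + (1/(r:ℝ)) * ((⨆ k : Fin n, Q k k) - γlow)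
        = (1/(r:ℝ)) * (Real.sqrt 2 * K + (⨆ k : Fin n, Q k k) - γlow) := by
      field_simp
      ring
    linarith
  -- measure part
  have hNpos : 0 < (regGrid n r).ncard := hgrid_ne.ncard_pos hfin
  have hnN : n < (regGrid n r).ncard := regGrid_card hn hr
  haveI hprob : IsProbabilityMeasure (uniformGrid n r) := uniformGrid_prob hfin hNpos
  set N := (regGrid n r).ncard with hNdef
  set c : ℝ := (((N - n : ℕ)):ℝ) / N with hcdef
  have hc0 : 0 < c := by
    apply div_pos _ (by exact_mod_cast hNpos)
    have : 0 < N - n := by omega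
    exact_mod_cast this
  have hc1 : c < 1 := by
    rw [hcdef, div_lt_one (by exact_mod_cast hNpos)]
    have h1 : N - n < N := by omega
    exact_mod_cast h1
  have hceq : c = 1 - (n:ℝ)/N := by
    rw [hcdef, Nat.cast_sub hnN.le]
    field_simp
  have hcM : c ^ M ≤ φ := by
    have hlogc : Real.log c < 0 := Real.log_neg hc0 hc1
    have hM' : Real.log φ / Real.log c ≤ M := by
      rw [hceq, hNdef]
      exact hM
    have h1 : (M:ℝ) * Real.log c ≤ Real.log φ := (div_le_iff_of_neg hlogc).mp hM'
    calc c ^ M = Real.exp (Real.log (c ^ M)) := (Real.exp_log (pow_pos hc0 M)).symm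
      _ = Real.exp ((M:ℝ) * Real.log c) := by rw [Real.log_pow]
      _ ≤ Real.exp (Real.log φ) := Real.exp_le_exp.mpr h1
      _ = φ := Real.exp_log hφ0
  set P := Measure.pi (fun _ : Fin M => uniformGrid n r) with hPdef
  haveI : IsProbabilityMeasure P := by
    rw [hPdef]; infer_instance
  set A : Set (Fin M → EuclideanSpace ℝ (Fin n)) :=
    Set.univ.pi (fun _ => (↑S : Set (EuclideanSpace ℝ (Fin n)))ᶜ) with hAdef
  have hAmes : MeasurableSet A :=
    MeasurableSet.univ_pi fun i => (S.measurableSet).compl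
  have hPA : P A = ENNReal.ofReal (c ^ M) := by
    rw [hAdef, hPdef, Measure.pi_pi]
    rw [Finset.prod_congr rfl fun i (_ : i ∈ Finset.univ) =>
      uniformGrid_compl hfin hNpos S hSsub]
    rw [Finset.prod_const, Finset.card_univ, Fintype.card_fin, hScard]
    rw [← ENNReal.ofReal_pow hc0.le]
  have hPA2 : P A ≤ ENNReal.ofReal φ := by
    rw [hPA]
    exact ENNReal.ofReal_le_ofReal hcM
  -- inclusion of the complement in the first event
  have hsub1 : Aᶜ ⊆ {ω : Fin M → EuclideanSpace ℝ (Fin n) |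
      (⨅ i : Fin M, (ω i) ⬝ᵥ Q.mulVec (ω i)) - γQ ≤
        (1 / (r : ℝ)) * (Real.sqrt 2 * K + (⨆ k : Fin n, Q k k) - γlow)} := by
    intro ω hω
    rw [Set.mem_compl_iff, hAdef, Set.mem_univ_pi] at hω
    push_neg at hω
    obtain ⟨i₀, h₀⟩ := hω
    rw [Set.notMem_compl_iff] at h₀
    have hinf : (⨅ i : Fin M, (ω i) ⬝ᵥ Q.mulVec (ω i)) ≤ (ω i₀) ⬝ᵥ Q.mulVec (ω i₀) :=
      ciInf_le ((Set.finite_range _).bddBelow) i₀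
    have h1 := hSval (ω i₀) h₀
    show (⨅ i : Fin M, (ω i) ⬝ᵥ Q.mulVec (ω i)) - γQ ≤ _
    linarith
  have hmain : ENNReal.ofReal (1 - φ) ≤ P {ω : Fin M → EuclideanSpace ℝ (Fin n) |
      (⨅ i : Fin M, (ω i) ⬝ᵥ Q.mulVec (ω i)) - γQ ≤
        (1 / (r : ℝ)) * (Real.sqrt 2 * K + (⨆ k : Fin n, Q k k) - γlow)} := by
    have h1 : P Aᶜ = 1 - P A := prob_compl_eq_one_sub hAmes
    have h2 : ENNReal.ofReal (1 - φ) ≤ 1 - ENNReal.ofReal φ := by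
      apply ENNReal.le_sub_of_add_le_right ENNReal.ofReal_ne_top
      rw [← ENNReal.ofReal_add (by linarith) hφ0.le]
      rw [show (1 - φ) + φ = 1 from by ring, ENNReal.ofReal_one]
    calc ENNReal.ofReal (1 - φ) ≤ 1 - ENNReal.ofReal φ := h2
      _ ≤ 1 - P A := tsub_le_tsub_left hPA2 1
      _ = P Aᶜ := h1.symm
      _ ≤ _ := measure_mono hsub1
  refine ⟨hmain, ?_⟩
  intro ε hε hD hrε
  refine le_trans hmain (measure_mono ?_)
  intro ω hω
  have hcomp : (1/(r:ℝ)) * (Real.sqrt 2 * K + (⨆ k : Fin n, Q k k) - γlow)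
      ≤ (Real.sqrt 2 * K / ((⨆ k : Fin n, Q k k) - γlow) + 1) * ε := by
    set D' : ℝ := (⨆ k : Fin n, Q k k) - γlow with hD'
    have hDne : D' ≠ 0 := ne_of_gt hD
    have h1 : D' / ε ≤ r := by
      rw [ge_iff_le, one_div_mul_eq_div] at hrε
      exact hrε
    have h2 : D' ≤ (r:ℝ) * ε := by
      rw [div_le_iff₀ hε] at h1
      linarith
    have h3 : 1/(r:ℝ) ≤ ε / D' := by
      rw [div_le_div_iff₀ hrpos hD]
      linarith
    have h4 : 0 ≤ Real.sqrt 2 * K + D' := by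
      have := Real.sqrt_nonneg 2
      nlinarith
    calc (1/(r:ℝ)) * (Real.sqrt 2 * K + (⨆ k : Fin n, Q k k) - γlow)
        = (1/(r:ℝ)) * (Real.sqrt 2 * K + D') := by rw [hD']; ring_nf
      _ ≤ (ε / D') * (Real.sqrt 2 * K + D') := mul_le_mul_of_nonneg_right h3 h4
      _ = (Real.sqrt 2 * K / D' + 1) * ε := by field_simp
      _ = (Real.sqrt 2 * K / ((⨆ k : Fin n, Q k k) - γlow) + 1) * ε := by rw [hD']
  show (⨅ i : Fin M, (ω i) ⬝ᵥ Q.mulVec (ω i)) - γQ ≤ _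
  have hω' : (⨅ i : Fin M, (ω i) ⬝ᵥ Q.mulVec (ω i)) - γQ ≤
      (1 / (r : ℝ)) * (Real.sqrt 2 * K + (⨆ k : Fin n, Q k k) - γlow) := hω
  linarith
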